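/- In a special abstract rank one group X with abelian unipotent subgroups A and B, setting H = N_X(A) ∩ N_X(B), for all nontrivial a₁, a₂ in A with a₁a₂ ≠ 1 one has a₁ ∈ a₂·[A,H], i.e. a₁ and a₂ lie in the same coset of the commutator subgroup [A,H] in A. -/

import Mathlib

/-- Conjugate `S ^ g = g⁻¹ S g` of a subgroup. -/
def conjSub {X : Type*} [Group X] (S : Subgroup X) (g : X) : Subgroup X :=
  S.map ((MulAut.conj g⁻¹).toMonoidHom)

section Aux
variable {X : Type*} [Group X]

lemma mem_conjSub_iff {S : Subgroup X} {g y : X} :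
    y ∈ conjSub S g ↔ g * y * g⁻¹ ∈ S := by
  unfold conjSub
  rw [Subgroup.mem_map]
  constructor
  · rintro ⟨s, hs, rfl⟩
    have hfs : g * (((MulAut.conj g⁻¹).toMonoidHom : X →* X) s) * g⁻¹ = s := by
      simp only [MulEquiv.coe_toMonoidHom, MulAut.conj_apply]
      group
    rwa [hfs]
  · intro hy
    refine ⟨g * y * g⁻¹, hy, ?_⟩
    simp only [MulEquiv.coe_toMonoidHom, MulAut.conj_apply]
    group

lemma conjSub_mul (S : Subgroup X) (g h : X) :
    conjSub S (g * h) = conjSub (conjSub S g) h := by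
  ext y
  rw [mem_conjSub_iff, mem_conjSub_iff, mem_conjSub_iff,
    show g * (h * y * h⁻¹) * g⁻¹ = g * h * y * (g * h)⁻¹ by group]

lemma conjSub_one (S : Subgroup X) : conjSub S (1 : X) = S := by
  ext y
  rw [mem_conjSub_iff]
  simp

lemma conjSub_self_of_mem {S : Subgroup X} {g : X} (hg : g ∈ S) : conjSub S g = S := by
  ext y
  rw [mem_conjSub_iff]
  constructor
  · intro h
    have hy : y = g⁻¹ * (g * y * g⁻¹) * g := by group
    rw [hy]
    exact S.mul_mem (S.mul_mem (S.inv_mem hg) h) hg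
  · intro h
    exact S.mul_mem (S.mul_mem hg h) (S.inv_mem hg)

lemma mem_conjSub_of_mem {S : Subgroup X} {g y : X} (hy : y ∈ S) :
    g⁻¹ * y * g ∈ conjSub S g := by
  rw [mem_conjSub_iff, show g * (g⁻¹ * y * g) * g⁻¹ = y by group]
  exact hy

lemma mem_normalizer_of_conjSub {S : Subgroup X} {g : X} (h : conjSub S g = S) :
    g ∈ Subgroup.normalizer (S : Set X) := by
  rw [Subgroup.mem_normalizer_iff]
  intro y
  constructor
  · intro hy
    exact mem_conjSub_iff.mp (h.symm ▸ hy)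
  · intro hy
    have h2 : y ∈ conjSub S g := mem_conjSub_iff.mpr hy
    rwa [h] at h2

end Aux
open scoped commutatorElement
theorem stmt6
    {X : Type*} [Group X] (A B : Subgroup X) (hAB : A ≠ B)
    (hAcomm : IsMulCommutative A) (hBcomm : IsMulCommutative B)
    (hgen : A ⊔ B = ⊤)
    (hab : ∀ a ∈ A, a ≠ 1 → ∃ b ∈ B, b ≠ 1 ∧ conjSub A b = conjSub B a)
    (hba : ∀ b ∈ B, b ≠ 1 → ∃ a ∈ A, a ≠ 1 ∧ conjSub B a = conjSub A b)
    (bf : X → X)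
    (hbf : ∀ a ∈ A, a ≠ 1 → bf a ∈ B ∧ bf a ≠ 1 ∧ conjSub A (bf a) = conjSub B a)
    (hbfu : ∀ a ∈ A, a ≠ 1 → ∀ b ∈ B, b ≠ 1 → conjSub A b = conjSub B a → b = bf a)
    (hspecial : ∀ a ∈ A, a ≠ 1 → bf a⁻¹ = (bf a)⁻¹)
    (a₁ a₂ : X) (ha₁ : a₁ ∈ A) (ha₁1 : a₁ ≠ 1) (ha₂ : a₂ ∈ A) (ha₂1 : a₂ ≠ 1)
    (h12 : a₁ * a₂ ≠ 1) :
    a₂⁻¹ * a₁ ∈ ⁅A, Subgroup.normalizer (A : Set X) ⊓ Subgroup.normalizer (B : Set X)⁆ := by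
  -- commutativity helpers
  have commA : ∀ p q : X, p ∈ A → q ∈ A → p * q = q * p := by
    intro p q hp hq
    have h := hAcomm.is_comm.comm (⟨p, hp⟩ : A) (⟨q, hq⟩ : A)
    simpa using congrArg Subtype.val h
  have commB : ∀ p q : X, p ∈ B → q ∈ B → p * q = q * p := by
    intro p q hp hq
    have h := hBcomm.is_comm.comm (⟨p, hp⟩ : B) (⟨q, hq⟩ : B)
    simpa using congrArg Subtype.val h
  -- if a nontrivial element of A normalizes B (elementwise conjugates B to itself), contradiction
  have normB : ∀ y, y ∈ A → y ≠ 1 → conjSub B y = B → False := by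
    intro y hy hy1 hc
    obtain ⟨hbB, _, hbe⟩ := hbf y hy hy1
    have h1 : conjSub A (bf y) = B := hbe.trans hc
    have h2 : conjSub (conjSub A (bf y)) (bf y)⁻¹ = conjSub B (bf y)⁻¹ := by rw [h1]
    rw [← conjSub_mul, mul_inv_cancel, conjSub_one,
        conjSub_self_of_mem (B.inv_mem hbB)] at h2
    exact hAB h2
  -- elements of A are separated by conjugation of B
  have eqON : ∀ y z, y ∈ A → z ∈ A → conjSub B y = conjSub B z → y = z := by
    intro y z hy hz hyz
    by_contra hne
    have h0 : conjSub B (y * z⁻¹) = B := by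
      rw [conjSub_mul, hyz, ← conjSub_mul, mul_inv_cancel, conjSub_one]
    exact normB _ (A.mul_mem hy (A.inv_mem hz))
      (fun h => hne (by rwa [mul_inv_eq_one] at h)) h0
  -- packaged facts about n(a) = bf a * a⁻¹ * bf a
  have pack : ∀ a, a ∈ A → a ≠ 1 →
      conjSub A (bf a * a⁻¹ * bf a) = B ∧ conjSub B (bf a * a⁻¹ * bf a) = A ∧
        a * (bf a * a⁻¹ * bf a) = bf a * a⁻¹ := by
    intro a ha ha1
    obtain ⟨hbB, _, hbe⟩ := hbf a ha ha1
    obtain ⟨_, _, hbe'⟩ := hbf a⁻¹ (A.inv_mem ha) (inv_ne_one.mpr ha1)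
    have hsp : bf a⁻¹ = (bf a)⁻¹ := hspecial a ha ha1
    have swA : conjSub A (bf a * a⁻¹ * bf a) = B := by
      rw [conjSub_mul, conjSub_mul, hbe, ← conjSub_mul, ← conjSub_mul,
          show a * (a⁻¹ * bf a) = bf a by group]
      exact conjSub_self_of_mem hbB
    have swB : conjSub B (bf a * a⁻¹ * bf a) = A := by
      rw [conjSub_mul, conjSub_mul, conjSub_self_of_mem hbB, ← hbe', hsp,
          ← conjSub_mul, inv_mul_cancel, conjSub_one]
    have hzB : (bf a * a⁻¹ * bf a)⁻¹ * a * (bf a * a⁻¹ * bf a) ∈ B := by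
      have h := mem_conjSub_of_mem (g := bf a * a⁻¹ * bf a) ha
      rwa [swA] at h
    have hyA : (bf a * a⁻¹ * bf a)⁻¹ * bf a * (bf a * a⁻¹ * bf a) ∈ A := by
      have h := mem_conjSub_of_mem (g := bf a * a⁻¹ * bf a) hbB
      rwa [swB] at h
    have huAB : a * ((bf a * a⁻¹ * bf a)⁻¹ * bf a * (bf a * a⁻¹ * bf a))
        = bf a * ((bf a * a⁻¹ * bf a)⁻¹ * a * (bf a * a⁻¹ * bf a)) := by group
    have huA : a * ((bf a * a⁻¹ * bf a)⁻¹ * bf a * (bf a * a⁻¹ * bf a)) ∈ A :=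
      A.mul_mem ha hyA
    have huB : a * ((bf a * a⁻¹ * bf a)⁻¹ * bf a * (bf a * a⁻¹ * bf a)) ∈ B := by
      rw [huAB]; exact B.mul_mem hbB hzB
    have hu1 : a * ((bf a * a⁻¹ * bf a)⁻¹ * bf a * (bf a * a⁻¹ * bf a)) = 1 := by
      by_contra hne
      exact normB _ huA hne (conjSub_self_of_mem huB)
    have main2 : (bf a * a⁻¹ * bf a)⁻¹ * bf a * (bf a * a⁻¹ * bf a) = a⁻¹ :=
      (inv_eq_of_mul_eq_one_right hu1).symm
    have braid : a * (bf a * a⁻¹ * bf a) = bf a * a⁻¹ := by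
      have h3 : bf a * (bf a * a⁻¹ * bf a) = (bf a * a⁻¹ * bf a) * a⁻¹ := by
        calc bf a * (bf a * a⁻¹ * bf a)
            = (bf a * a⁻¹ * bf a) *
              ((bf a * a⁻¹ * bf a)⁻¹ * bf a * (bf a * a⁻¹ * bf a)) := by group
          _ = (bf a * a⁻¹ * bf a) * a⁻¹ := by rw [main2]
      have h4 : bf a * (bf a * a⁻¹ * bf a) = bf a * (a⁻¹ * bf a * a⁻¹) := by
        rw [h3]; group
      have h5 := mul_left_cancel h4
      rw [h5]; group
    exact ⟨swA, swB, braid⟩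
  -- instantiate
  obtain ⟨hb1B, hb11, hbe1⟩ := hbf a₁ ha₁ ha₁1
  obtain ⟨hb2B, hb21, hbe2⟩ := hbf a₂ ha₂ ha₂1
  obtain ⟨hbcB, hbc1, hbec⟩ := hbf (a₁ * a₂) (A.mul_mem ha₁ ha₂) h12
  obtain ⟨swA1, swB1, braid1⟩ := pack a₁ ha₁ ha₁1
  obtain ⟨swA2, swB2, braid2⟩ := pack a₂ ha₂ ha₂1
  -- bf a₁ * bf a₂ ≠ 1
  have hd1 : bf a₁ * bf a₂ ≠ 1 := by
    intro h
    have hb2eq : bf a₂ = (bf a₁)⁻¹ := eq_inv_of_mul_eq_one_right h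
    obtain ⟨_, _, hbei⟩ := hbf a₁⁻¹ (A.inv_mem ha₁) (inv_ne_one.mpr ha₁1)
    have hsp1 : bf a₁⁻¹ = (bf a₁)⁻¹ := hspecial a₁ ha₁ ha₁1
    have hcc : conjSub B a₂ = conjSub B a₁⁻¹ := by
      rw [← hbe2, hb2eq, ← hsp1, hbei]
    have heq := eqON a₂ a₁⁻¹ ha₂ (A.inv_mem ha₁) hcc
    exact h12 (by rw [heq, mul_inv_cancel])
  -- the harmonic element x with conjSub B x = conjSub A (bf a₁ * bf a₂)
  obtain ⟨x, hxA, hx1, hxe⟩ := hba (bf a₁ * bf a₂) (B.mul_mem hb1B hb2B) hd1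
  -- inverse swap facts
  have swB1' : conjSub B (bf a₁ * a₁⁻¹ * bf a₁)⁻¹ = A := by
    rw [← swA1, ← conjSub_mul, mul_inv_cancel, conjSub_one]
  have swA2' : conjSub A (bf a₂ * a₂⁻¹ * bf a₂)⁻¹ = B := by
    rw [← swB2, ← conjSub_mul, mul_inv_cancel, conjSub_one]
  have swB2' : conjSub B (bf a₂ * a₂⁻¹ * bf a₂)⁻¹ = A := by
    rw [← swA2, ← conjSub_mul, mul_inv_cancel, conjSub_one]
  -- membership of conjugated bc elements
  have he1A : (bf a₁ * a₁⁻¹ * bf a₁)⁻¹ * bf (a₁ * a₂) * (bf a₁ * a₁⁻¹ * bf a₁) ∈ A := by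
    have h := mem_conjSub_of_mem (g := bf a₁ * a₁⁻¹ * bf a₁) hbcB
    rwa [swB1] at h
  have he2A : (bf a₂ * a₂⁻¹ * bf a₂)⁻¹ * bf (a₁ * a₂) * (bf a₂ * a₂⁻¹ * bf a₂) ∈ A := by
    have h := mem_conjSub_of_mem (g := bf a₂ * a₂⁻¹ * bf a₂) hbcB
    rwa [swB2] at h
  -- main chain 1
  have chain1 : conjSub B ((bf a₁ * a₁⁻¹ * bf a₁)⁻¹ * bf (a₁ * a₂) * (bf a₁ * a₁⁻¹ * bf a₁))
      = conjSub B (x * a₁⁻¹) := by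
    calc conjSub B ((bf a₁ * a₁⁻¹ * bf a₁)⁻¹ * bf (a₁ * a₂) * (bf a₁ * a₁⁻¹ * bf a₁))
        = conjSub (conjSub (conjSub B (bf a₁ * a₁⁻¹ * bf a₁)⁻¹) (bf (a₁ * a₂)))
            (bf a₁ * a₁⁻¹ * bf a₁) := by
          rw [conjSub_mul B ((bf a₁ * a₁⁻¹ * bf a₁)⁻¹ * bf (a₁ * a₂)) (bf a₁ * a₁⁻¹ * bf a₁),
              conjSub_mul B (bf a₁ * a₁⁻¹ * bf a₁)⁻¹ (bf (a₁ * a₂))]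
      _ = conjSub (conjSub A (bf (a₁ * a₂))) (bf a₁ * a₁⁻¹ * bf a₁) := by rw [swB1']
      _ = conjSub (conjSub B (a₁ * a₂)) (bf a₁ * a₁⁻¹ * bf a₁) := by rw [hbec]
      _ = conjSub B (a₁ * a₂ * (bf a₁ * a₁⁻¹ * bf a₁)) := by
          rw [conjSub_mul B (a₁ * a₂) (bf a₁ * a₁⁻¹ * bf a₁)]
      _ = conjSub B (a₂ * bf a₁ * a₁⁻¹) := by
          rw [show a₁ * a₂ * (bf a₁ * a₁⁻¹ * bf a₁) = a₂ * bf a₁ * a₁⁻¹ by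
            rw [commA a₁ a₂ ha₁ ha₂, mul_assoc, braid1]; group]
      _ = conjSub (conjSub (conjSub B a₂) (bf a₁)) a₁⁻¹ := by
          rw [conjSub_mul B (a₂ * bf a₁) a₁⁻¹, conjSub_mul B a₂ (bf a₁)]
      _ = conjSub (conjSub (conjSub A (bf a₂)) (bf a₁)) a₁⁻¹ := by rw [hbe2]
      _ = conjSub (conjSub A (bf a₂ * bf a₁)) a₁⁻¹ := by rw [conjSub_mul A (bf a₂) (bf a₁)]
      _ = conjSub (conjSub A (bf a₁ * bf a₂)) a₁⁻¹ := by
          rw [commB (bf a₂) (bf a₁) hb2B hb1B]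
      _ = conjSub (conjSub B x) a₁⁻¹ := by rw [hxe]
      _ = conjSub B (x * a₁⁻¹) := by rw [conjSub_mul B x a₁⁻¹]
  -- main chain 2
  have chain2 : conjSub B ((bf a₂ * a₂⁻¹ * bf a₂)⁻¹ * bf (a₁ * a₂) * (bf a₂ * a₂⁻¹ * bf a₂))
      = conjSub B (x * a₂⁻¹) := by
    calc conjSub B ((bf a₂ * a₂⁻¹ * bf a₂)⁻¹ * bf (a₁ * a₂) * (bf a₂ * a₂⁻¹ * bf a₂))
        = conjSub (conjSub (conjSub B (bf a₂ * a₂⁻¹ * bf a₂)⁻¹) (bf (a₁ * a₂)))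
            (bf a₂ * a₂⁻¹ * bf a₂) := by
          rw [conjSub_mul B ((bf a₂ * a₂⁻¹ * bf a₂)⁻¹ * bf (a₁ * a₂)) (bf a₂ * a₂⁻¹ * bf a₂),
              conjSub_mul B (bf a₂ * a₂⁻¹ * bf a₂)⁻¹ (bf (a₁ * a₂))]
      _ = conjSub (conjSub A (bf (a₁ * a₂))) (bf a₂ * a₂⁻¹ * bf a₂) := by rw [swB2']
      _ = conjSub (conjSub B (a₁ * a₂)) (bf a₂ * a₂⁻¹ * bf a₂) := by rw [hbec]
      _ = conjSub B (a₁ * a₂ * (bf a₂ * a₂⁻¹ * bf a₂)) := by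
          rw [conjSub_mul B (a₁ * a₂) (bf a₂ * a₂⁻¹ * bf a₂)]
      _ = conjSub B (a₁ * bf a₂ * a₂⁻¹) := by
          rw [show a₁ * a₂ * (bf a₂ * a₂⁻¹ * bf a₂) = a₁ * bf a₂ * a₂⁻¹ by
            rw [mul_assoc, braid2]; group]
      _ = conjSub (conjSub (conjSub B a₁) (bf a₂)) a₂⁻¹ := by
          rw [conjSub_mul B (a₁ * bf a₂) a₂⁻¹, conjSub_mul B a₁ (bf a₂)]
      _ = conjSub (conjSub (conjSub A (bf a₁)) (bf a₂)) a₂⁻¹ := by rw [hbe1]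
      _ = conjSub (conjSub A (bf a₁ * bf a₂)) a₂⁻¹ := by rw [conjSub_mul A (bf a₁) (bf a₂)]
      _ = conjSub (conjSub B x) a₂⁻¹ := by rw [hxe]
      _ = conjSub B (x * a₂⁻¹) := by rw [conjSub_mul B x a₂⁻¹]
  -- exact element identities
  have he1 : (bf a₁ * a₁⁻¹ * bf a₁)⁻¹ * bf (a₁ * a₂) * (bf a₁ * a₁⁻¹ * bf a₁) = x * a₁⁻¹ :=
    eqON _ _ he1A (A.mul_mem hxA (A.inv_mem ha₁)) chain1
  have he2 : (bf a₂ * a₂⁻¹ * bf a₂)⁻¹ * bf (a₁ * a₂) * (bf a₂ * a₂⁻¹ * bf a₂) = x * a₂⁻¹ :=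
    eqON _ _ he2A (A.mul_mem hxA (A.inv_mem ha₂)) chain2
  -- the H element h := n₂⁻¹ * n₁
  have hhA : conjSub A ((bf a₂ * a₂⁻¹ * bf a₂)⁻¹ * (bf a₁ * a₁⁻¹ * bf a₁)) = A := by
    rw [conjSub_mul A (bf a₂ * a₂⁻¹ * bf a₂)⁻¹ (bf a₁ * a₁⁻¹ * bf a₁), swA2', swB1]
  have hhB : conjSub B ((bf a₂ * a₂⁻¹ * bf a₂)⁻¹ * (bf a₁ * a₁⁻¹ * bf a₁)) = B := by
    rw [conjSub_mul B (bf a₂ * a₂⁻¹ * bf a₂)⁻¹ (bf a₁ * a₁⁻¹ * bf a₁), swB2', swA1]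
  have hhH : (bf a₂ * a₂⁻¹ * bf a₂)⁻¹ * (bf a₁ * a₁⁻¹ * bf a₁) ∈ Subgroup.normalizer (A : Set X) ⊓ Subgroup.normalizer (B : Set X) :=
    ⟨mem_normalizer_of_conjSub hhA, mem_normalizer_of_conjSub hhB⟩
  -- commutator
  have hcomm : ⁅((bf a₂ * a₂⁻¹ * bf a₂)⁻¹ * bf (a₁ * a₂) * (bf a₂ * a₂⁻¹ * bf a₂))⁻¹,
      ((bf a₂ * a₂⁻¹ * bf a₂)⁻¹ * (bf a₁ * a₁⁻¹ * bf a₁))⁻¹⁆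
        ∈ ⁅A, Subgroup.normalizer (A : Set X) ⊓ Subgroup.normalizer (B : Set X)⁆ :=
    Subgroup.commutator_mem_commutator (A.inv_mem he2A)
      ((Subgroup.normalizer (A : Set X) ⊓ Subgroup.normalizer (B : Set X)).inv_mem hhH)
  have hval : ⁅((bf a₂ * a₂⁻¹ * bf a₂)⁻¹ * bf (a₁ * a₂) * (bf a₂ * a₂⁻¹ * bf a₂))⁻¹,
      ((bf a₂ * a₂⁻¹ * bf a₂)⁻¹ * (bf a₁ * a₁⁻¹ * bf a₁))⁻¹⁆ = a₂ * a₁⁻¹ := by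
    have h1 : ⁅((bf a₂ * a₂⁻¹ * bf a₂)⁻¹ * bf (a₁ * a₂) * (bf a₂ * a₂⁻¹ * bf a₂))⁻¹,
        ((bf a₂ * a₂⁻¹ * bf a₂)⁻¹ * (bf a₁ * a₁⁻¹ * bf a₁))⁻¹⁆
          = ((bf a₂ * a₂⁻¹ * bf a₂)⁻¹ * bf (a₁ * a₂) * (bf a₂ * a₂⁻¹ * bf a₂))⁻¹ *
            ((bf a₁ * a₁⁻¹ * bf a₁)⁻¹ * bf (a₁ * a₂) * (bf a₁ * a₁⁻¹ * bf a₁)) := by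
      rw [commutatorElement_def]; group
    rw [h1, he1, he2]; group
  have hfin : a₂⁻¹ * a₁ = (a₂ * a₁⁻¹)⁻¹ := by
    rw [mul_inv_rev, inv_inv]
    exact commA a₂⁻¹ a₁ (A.inv_mem ha₂) ha₁
  rw [hfin, ← hval]
  exact Subgroup.inv_mem _ hcomm
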